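/- Let L be a continuous frame and L_s a sublattice of L containing 0 that sup-generates L. Then (Spec(L), Δ_L(L_s)) is a locally small space whose topology of weakly open sets is Δ_L(L), and the topological space (Spec(L), Δ_L(L)) is sober and locally compact. -/

import Mathlib

open Set TopologicalSpace

universe u



/-! ### Frames: spectra -/

/-- The set of non-unit primes of a frame. -/
def SpecS (L : Type u) [Order.Frame L] : Set L :=
  {p | p ≠ ⊤ ∧ ∀ a b : L, p = a ⊓ b → p = a ∨ p = b}

/-- `DeltaS a = { p ∈ Spec L : a ≰ p }`. -/
def DeltaS {L : Type u} [Order.Frame L] (a : L) : Set (SpecS L) :=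
  {p | ¬ a ≤ (p : L)}

variable {L M N : Type u} [Order.Frame L] [Order.Frame M] [Order.Frame N]

lemma SpecS.inf_le {p : L} (hp : p ∈ SpecS L) {a b : L} (h : a ⊓ b ≤ p) :
    a ≤ p ∨ b ≤ p := by
  have h1 : p = (p ⊔ a) ⊓ (p ⊔ b) := by
    rw [← sup_inf_left, sup_eq_left.mpr h]
  rcases hp.2 _ _ h1 with h2 | h2
  · exact Or.inl (by rw [h2]; exact le_sup_right)
  · exact Or.inr (by rw [h2]; exact le_sup_right)

lemma DeltaS_bot : DeltaS (⊥ : L) = ∅ := by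
  ext p; simp [DeltaS]

lemma DeltaS_top : DeltaS (⊤ : L) = univ := by
  ext p; simpa [DeltaS, top_le_iff] using p.2.1

lemma DeltaS_inf (a b : L) : DeltaS (a ⊓ b) = DeltaS a ∩ DeltaS b := by
  ext p
  constructor
  · intro hp
    constructor <;> · intro hle; exact hp (le_trans (by simp) hle)
  · rintro ⟨h1, h2⟩ hle
    rcases SpecS.inf_le p.2 hle with h | h
    · exact h1 h
    · exact h2 h

lemma DeltaS_sup (a b : L) : DeltaS (a ⊔ b) = DeltaS a ∪ DeltaS b := by
  ext p
  constructor
  · intro hp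
    by_cases ha : a ≤ (p : L)
    · exact Or.inr fun hb => hp (sup_le ha hb)
    · exact Or.inl ha
  · rintro (h | h) hle
    · exact h (le_trans le_sup_left hle)
    · exact h (le_trans le_sup_right hle)

lemma DeltaS_sSup (S : Set L) : DeltaS (sSup S) = ⋃ a ∈ S, DeltaS a := by
  ext p
  simp only [DeltaS, mem_setOf_eq, mem_iUnion, sSup_le_iff, not_forall]

/-- The hull-kernel topology on the spectrum of a frame: the open sets are
exactly the sets of the form `DeltaS a`. -/
def specTop (L : Type u) [Order.Frame L] : TopologicalSpace (SpecS L) where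
  IsOpen U := U ∈ Set.range (DeltaS (L := L))
  isOpen_univ := ⟨⊤, DeltaS_top⟩
  isOpen_inter := by
    rintro _ _ ⟨a, rfl⟩ ⟨b, rfl⟩
    exact ⟨a ⊓ b, DeltaS_inf a b⟩
  isOpen_sUnion := by
    intro S hS
    refine ⟨sSup {a | DeltaS a ∈ S}, ?_⟩
    rw [DeltaS_sSup]
    apply Set.Subset.antisymm
    · intro p hp
      simp only [mem_iUnion] at hp ⊢
      obtain ⟨a, ha, hpa⟩ := hp
      exact ⟨_, ha, hpa⟩
    · intro p hp
      rcases hp with ⟨U, hU, hpU⟩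
      obtain ⟨a, rfl⟩ := hS U hU
      simp only [mem_iUnion]
      exact ⟨a, hU, hpU⟩

/-! ### Right Galois adjoints -/

/-- The right Galois adjoint of a map between complete lattices. -/
def rAdj [CompleteLattice M] [CompleteLattice L] (h : L → M) : M → L :=
  fun m => sSup {l | h l ≤ m}

lemma gc_rAdj (h : FrameHom L M) : GaloisConnection ⇑h (rAdj ⇑h) := by
  intro l m
  constructor
  · intro hl; exact le_sSup hl
  · intro hl
    calc h l ≤ h (rAdj (⇑h) m) := OrderHomClass.mono h hl
      _ ≤ m := by
          rw [rAdj, map_sSup]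
          apply sSup_le
          rintro _ ⟨l', hl', rfl⟩
          exact hl'

lemma rAdj_id : rAdj (id : L → L) = id := by
  funext m
  exact le_antisymm (sSup_le fun _ h => h) (le_sSup le_rfl)

lemma rAdj_mem_SpecS (h : FrameHom L M) {p : M} (hp : p ∈ SpecS M) :
    rAdj ⇑h p ∈ SpecS L := by
  have gc := gc_rAdj h
  constructor
  · intro htop
    apply hp.1
    rw [top_le_iff.symm]
    have : h ⊤ ≤ p := (gc ⊤ p).mpr (htop ▸ le_rfl)
    simpa using this
  · intro a b hab
    have hle : h a ⊓ h b ≤ p := by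
      rw [← map_inf]
      exact (gc _ p).mpr (le_of_eq hab.symm)
    have h1 : rAdj ⇑h p ≤ a := hab ▸ inf_le_left
    have h2 : rAdj ⇑h p ≤ b := hab ▸ inf_le_right
    rcases SpecS.inf_le hp hle with hc | hc
    · exact Or.inl (le_antisymm h1 ((gc a p).mp hc))
    · exact Or.inr (le_antisymm h2 ((gc b p).mp hc))

/-! ### Way-below, continuous and spatial frames -/

/-- `b` is way below `a`. -/
def WayBelow (b a : L) : Prop :=
  ∀ D : Set L, D.Nonempty → DirectedOn (· ≤ ·) D → a ≤ sSup D → ∃ d ∈ D, b ≤ d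

/-- A continuous frame. -/
def IsContinuousFrame (L : Type u) [Order.Frame L] : Prop :=
  ∀ a : L, a = sSup {b | WayBelow b a}

/-- A spatial frame: every element is a meet of primes. -/
def IsSpatialFrame (L : Type u) [Order.Frame L] : Prop :=
  ∀ a : L, ∃ T ⊆ SpecS L, a = sInf T

/-! ### Dominating and compatible homomorphisms -/

/-- `h` is dominating with respect to the designated sublattices. -/
def Dominating (sL : Set L) (sM : Set M) (h : L → M) : Prop :=
  ∀ m ∈ sM, ∃ l ∈ sL, h l ⊓ m = m

/-- `h` is compatible with respect to the designated sublattices. -/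
def Compatible (sL : Set L) (sM : Set M) (h : L → M) : Prop :=
  ∀ l ∈ sL, ∀ m ∈ sM, h l ⊓ m ∈ sM

/-- The weakly open sets generated by a family: unions of subfamilies. -/
def woF {X : Type u} (Lx : Set (Set X)) : Set (Set X) := {U | ∃ F ⊆ Lx, U = ⋃₀ F}

/-! ### Auxiliary lemmas -/

section Aux

lemma wayBelow_le {b a : L} (h : WayBelow b a) : b ≤ a := by
  obtain ⟨d, hd, hbd⟩ := h ({a} : Set L) ⟨a, rfl⟩
    (fun x hx y hy => ⟨a, rfl, (Set.mem_singleton_iff.mp hx).le,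
      (Set.mem_singleton_iff.mp hy).le⟩) (by simp)
  rw [Set.mem_singleton_iff.mp hd] at hbd
  exact hbd

lemma wayBelow_mono_left {c b a : L} (h : c ≤ b) (h2 : WayBelow b a) : WayBelow c a := by
  intro D hne hdir hle
  obtain ⟨d, hd, hbd⟩ := h2 D hne hdir hle
  exact ⟨d, hd, h.trans hbd⟩

lemma wayBelow_le_trans {b a a' : L} (h : WayBelow b a) (h2 : a ≤ a') : WayBelow b a' :=
  fun D hne hdir hle => h D hne hdir (h2.trans hle)

lemma wayBelow_bot {a : L} : WayBelow (⊥ : L) a := by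
  intro D hne _ _
  obtain ⟨d, hd⟩ := hne
  exact ⟨d, hd, bot_le⟩

lemma wayBelow_sup {b c a : L} (hb : WayBelow b a) (hc : WayBelow c a) :
    WayBelow (b ⊔ c) a := by
  intro D hne hdir hle
  obtain ⟨d1, hd1, h1⟩ := hb D hne hdir hle
  obtain ⟨d2, hd2, h2⟩ := hc D hne hdir hle
  obtain ⟨d, hd, hle1, hle2⟩ := hdir d1 hd1 d2 hd2
  exact ⟨d, hd, sup_le (h1.trans hle1) (h2.trans hle2)⟩

lemma exists_wayBelow_not_le (hcont : IsContinuousFrame L) {a p : L} (h : ¬ a ≤ p) :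
    ∃ b, WayBelow b a ∧ ¬ b ≤ p := by
  by_contra hc
  push_neg at hc
  exact h (le_of_eq_of_le (hcont a) (sSup_le fun b hb => hc b hb))

/-- Interpolation in a continuous frame. -/
lemma wayBelow_interpolate (hcont : IsContinuousFrame L) {b a : L} (h : WayBelow b a) :
    ∃ c, WayBelow b c ∧ WayBelow c a := by
  set S : Set L := {d | ∃ c, WayBelow d c ∧ WayBelow c a} with hS
  have hne : S.Nonempty := ⟨⊥, ⊥, wayBelow_bot, wayBelow_bot⟩
  have hdir : DirectedOn (· ≤ ·) S := by
    rintro d1 ⟨c1, hd1, hc1⟩ d2 ⟨c2, hd2, hc2⟩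
    exact ⟨d1 ⊔ d2,
      ⟨c1 ⊔ c2, wayBelow_sup (wayBelow_le_trans hd1 le_sup_left)
        (wayBelow_le_trans hd2 le_sup_right), wayBelow_sup hc1 hc2⟩,
      le_sup_left, le_sup_right⟩
  have hsup : a ≤ sSup S := by
    conv_lhs => rw [hcont a]
    refine sSup_le fun c hc => ?_
    conv_lhs => rw [hcont c]
    exact sSup_le fun d hd => le_sSup ⟨c, hd, hc⟩
  obtain ⟨d, ⟨c, hdc, hca⟩, hbd⟩ := h S hne hdir hsup
  exact ⟨c, wayBelow_mono_left hbd hdc, hca⟩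

/-- Construction of an interpolating chain below `a` above `b`. -/
lemma exists_chain (hcont : IsContinuousFrame L) {b a : L} (hba : WayBelow b a) :
    ∃ Y : ℕ → L, Y 0 = a ∧ (∀ n, WayBelow b (Y n)) ∧ ∀ n, WayBelow (Y (n + 1)) (Y n) := by
  have step : ∀ c : {x : L // WayBelow b x}, ∃ c' : {x : L // WayBelow b x},
      WayBelow c'.1 c.1 := by
    rintro ⟨c, hc⟩
    obtain ⟨c', h1, h2⟩ := wayBelow_interpolate hcont hc
    exact ⟨⟨c', h1⟩, h2⟩
  choose f hf using step
  refine ⟨fun n => (f^[n] ⟨a, hba⟩).1, rfl, fun n => (f^[n] ⟨a, hba⟩).2, fun n => ?_⟩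
  show WayBelow (f^[n + 1] ⟨a, hba⟩).1 (f^[n] ⟨a, hba⟩).1
  rw [Function.iterate_succ_apply']
  exact hf _

/-- Given a descending interpolating chain `Y` avoiding `↓u`, there is a prime above `u`
avoiding the chain. -/
lemma primeAbove {u : L} {Y : ℕ → L} (hdec : ∀ n, WayBelow (Y (n + 1)) (Y n))
    (hu : ∀ n, ¬ Y n ≤ u) : ∃ q ∈ SpecS L, u ≤ q ∧ ∀ n, ¬ Y n ≤ q := by
  have hanti : ∀ m k : ℕ, Y (m + k) ≤ Y m := by
    intro m k
    induction k with
    | zero => exact le_rfl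
    | succ k ih => exact (wayBelow_le (hdec (m + k))).trans ih
  have hanti' : ∀ {m n : ℕ}, m ≤ n → Y n ≤ Y m := by
    intro m n hmn
    obtain ⟨k, rfl⟩ := Nat.le.dest hmn
    exact hanti m k
  set S : Set L := {x | u ≤ x ∧ ∀ n, ¬ Y n ≤ x} with hSdef
  have hih : ∀ c ⊆ S, IsChain (· ≤ ·) c → ∀ y ∈ c, ∃ ub ∈ S, ∀ z ∈ c, z ≤ ub := by
    intro c hcS hchain x hxc
    refine ⟨sSup c, ⟨le_trans (hcS hxc).1 (le_sSup hxc), ?_⟩, fun z hz => le_sSup hz⟩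
    intro n hn
    obtain ⟨d, hd, hled⟩ := hdec n c ⟨x, hxc⟩ hchain.directedOn hn
    exact (hcS hd).2 (n + 1) hled
  obtain ⟨q, -, hqS, hqmax⟩ := zorn_le_nonempty₀ S hih u ⟨le_rfl, hu⟩
  refine ⟨q, ⟨?_, ?_⟩, hqS.1, hqS.2⟩
  · intro htop
    exact hqS.2 0 (htop ▸ le_top)
  · intro x y hxy
    by_contra hc
    push_neg at hc
    obtain ⟨hqx, hqy⟩ := hc
    have hx : x ∉ S := fun hxS => hqx (le_antisymm (hxy ▸ inf_le_left)
      (hqmax hxS (hxy ▸ inf_le_left)))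
    have hy : y ∉ S := fun hyS => hqy (le_antisymm (hxy ▸ inf_le_right)
      (hqmax hyS (hxy ▸ inf_le_right)))
    have hux : u ≤ x := le_trans hqS.1 (hxy ▸ inf_le_left)
    have huy : u ≤ y := le_trans hqS.1 (hxy ▸ inf_le_right)
    simp only [hSdef, Set.mem_setOf_eq, not_and, not_forall, not_not] at hx hy
    obtain ⟨n, hn⟩ := hx hux
    obtain ⟨m, hm⟩ := hy huy
    refine hqS.2 (max n m) ?_
    rw [hxy]
    exact le_inf ((hanti' (le_max_left n m)).trans hn)
      ((hanti' (le_max_right n m)).trans hm)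

/-- The basic compact saturated sets of the hull-kernel topology. -/
lemma isCompact_chain_set {Y : ℕ → L} (hdec : ∀ n, WayBelow (Y (n + 1)) (Y n)) :
    @IsCompact (SpecS L) (specTop L) {q : SpecS L | ∀ n, ¬ Y n ≤ (q : L)} := by
  classical
  letI : TopologicalSpace (SpecS L) := specTop L
  apply isCompact_of_finite_subcover
  intro ι U hUo hcov
  have h' : ∀ i, ∃ x : L, DeltaS x = U i := fun i => hUo i
  choose d hd using h'
  have hmem : ∃ n, Y n ≤ ⨆ i, d i := by
    by_contra hc
    push_neg at hc
    obtain ⟨q, hq, huq, hqn⟩ := primeAbove hdec hc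
    have : (⟨q, hq⟩ : SpecS L) ∈ ⋃ i, U i := hcov hqn
    obtain ⟨i, hi⟩ := Set.mem_iUnion.mp this
    rw [← hd i] at hi
    exact hi ((le_iSup d i).trans huq)
  obtain ⟨n, hn⟩ := hmem
  set D : Set L := Set.range (fun t : Finset ι => t.sup d) with hD
  have hDne : D.Nonempty := ⟨(∅ : Finset ι).sup d, ⟨∅, rfl⟩⟩
  have hDdir : DirectedOn (· ≤ ·) D := by
    rintro _ ⟨t1, rfl⟩ _ ⟨t2, rfl⟩
    exact ⟨(t1 ∪ t2).sup d, ⟨t1 ∪ t2, rfl⟩,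
      Finset.sup_mono Finset.subset_union_left, Finset.sup_mono Finset.subset_union_right⟩
  have hYD : Y n ≤ sSup D := by
    refine hn.trans (iSup_le fun i => ?_)
    have : d i = ({i} : Finset ι).sup d := by simp
    exact this ▸ le_sSup ⟨{i}, rfl⟩
  obtain ⟨_, ⟨t, rfl⟩, hle⟩ := hdec n D hDne hDdir hYD
  refine ⟨t, fun q hq => ?_⟩
  have htq : ¬ t.sup d ≤ (q : L) := fun h => hq (n + 1) (hle.trans h)
  have : ∃ i ∈ t, ¬ d i ≤ (q : L) := by
    by_contra hc
    push_neg at hc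
    exact htq (Finset.sup_le hc)
  obtain ⟨i, hit, hiq⟩ := this
  exact Set.mem_biUnion hit (hd i ▸ hiq)

end Aux

/-- For a continuous frame `L` with a sup-generating sublattice with zero `L_s`,
the pair `(Spec L, Δ_L(L_s))` is a locally small space whose weakly open sets
are exactly `Δ_L(L)`, and the hull-kernel topology on `Spec L` is sober and
locally compact. -/
theorem spectrum_of_continuous_frame {L : Type u} [Order.Frame L] (s : Set L)
    (hbot : ⊥ ∈ s) (hinf : ∀ a ∈ s, ∀ b ∈ s, a ⊓ b ∈ s)
    (hsup : ∀ a ∈ s, ∀ b ∈ s, a ⊔ b ∈ s)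
    (hgen : ∀ a : L, ∃ T ⊆ s, a = sSup T)
    (hcont : IsContinuousFrame L) :
    (∅ : Set (SpecS L)) ∈ DeltaS '' s ∧
    (∀ A ∈ DeltaS '' s, ∀ B ∈ DeltaS '' s, A ∩ B ∈ DeltaS '' s) ∧
    (∀ A ∈ DeltaS '' s, ∀ B ∈ DeltaS '' s, A ∪ B ∈ DeltaS '' s) ∧
    (∀ p : SpecS L, ∃ A ∈ DeltaS '' s, p ∈ A) ∧
    woF (DeltaS '' s) = Set.range (DeltaS (L := L)) ∧
    @T0Space (SpecS L) (specTop L) ∧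
    @QuasiSober (SpecS L) (specTop L) ∧
    @LocallyCompactSpace (SpecS L) (specTop L) := by
  letI : TopologicalSpace (SpecS L) := specTop L
  have hopen : ∀ a : L, IsOpen (DeltaS a) := fun a => ⟨a, rfl⟩
  refine ⟨⟨⊥, hbot, DeltaS_bot⟩, ?_, ?_, ?_, ?_, ?_, ?_, ?_⟩
  · rintro _ ⟨a, ha, rfl⟩ _ ⟨b, hb, rfl⟩
    exact ⟨a ⊓ b, hinf a ha b hb, DeltaS_inf a b⟩
  · rintro _ ⟨a, ha, rfl⟩ _ ⟨b, hb, rfl⟩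
    exact ⟨a ⊔ b, hsup a ha b hb, DeltaS_sup a b⟩
  · -- every point is in some basic set
    intro p
    obtain ⟨T, hTs, hT⟩ := hgen ⊤
    have htop : ¬ (⊤ : L) ≤ (p : L) := fun h => p.2.1 (top_le_iff.mp h)
    have : ∃ a ∈ T, ¬ a ≤ (p : L) := by
      by_contra hc
      push_neg at hc
      exact htop (hT ▸ sSup_le hc)
    obtain ⟨a, haT, hap⟩ := this
    exact ⟨DeltaS a, ⟨a, hTs haT, rfl⟩, hap⟩
  · -- weakly open sets are exactly the hull-kernel opens
    apply Set.Subset.antisymm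
    · rintro U ⟨F, hF, rfl⟩
      refine ⟨sSup {x | DeltaS x ∈ F}, ?_⟩
      rw [DeltaS_sSup]
      apply Set.Subset.antisymm
      · intro p hp
        obtain ⟨x, hx, hpx⟩ := Set.mem_iUnion₂.mp hp
        exact ⟨DeltaS x, hx, hpx⟩
      · rintro p ⟨V, hV, hpV⟩
        obtain ⟨x, -, rfl⟩ := hF hV
        exact Set.mem_iUnion₂.mpr ⟨x, hV, hpV⟩
    · rintro _ ⟨a, rfl⟩
      obtain ⟨T, hTs, rfl⟩ := hgen a
      refine ⟨DeltaS '' T, Set.image_mono hTs, ?_⟩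
      rw [DeltaS_sSup, Set.sUnion_image]
  · -- T0
    refine ⟨fun x y h => ?_⟩
    have h1 := (inseparable_iff_forall_isOpen.mp h) (DeltaS (x : L)) (hopen _)
    have h2 := (inseparable_iff_forall_isOpen.mp h) (DeltaS (y : L)) (hopen _)
    have hxy : (x : L) ≤ (y : L) := by
      by_contra hc
      exact (h1.mpr hc) le_rfl
    have hyx : (y : L) ≤ (x : L) := by
      by_contra hc
      exact (h2.mp hc) le_rfl
    exact Subtype.ext (le_antisymm hxy hyx)
  · -- sober
    refine ⟨fun {S} hS1 hS2 => ?_⟩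
    obtain ⟨a, ha⟩ : Sᶜ ∈ Set.range (DeltaS (L := L)) := hS2.isOpen_compl
    have hSa : S = {q : SpecS L | a ≤ (q : L)} := by
      rw [← compl_compl S, ← ha]
      ext q
      simp [DeltaS]
    set qq : L := sInf ((fun q : SpecS L => (q : L)) '' S) with hqq
    have hle : ∀ q ∈ S, qq ≤ (q : L) := fun q hq => sInf_le ⟨q, hq, rfl⟩
    obtain ⟨q0, hq0⟩ := hS1.nonempty
    have haq : a ≤ qq := le_sInf (by rintro _ ⟨q, hq, rfl⟩; rw [hSa] at hq; exact hq)
    have hqprime : qq ∈ SpecS L := by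
      constructor
      · intro htop
        exact q0.2.1 (top_le_iff.mp (htop ▸ hle q0 hq0))
      · intro x y hxy
        by_contra hc
        push_neg at hc
        have hx : ¬ x ≤ qq := fun h => hc.1 (le_antisymm (hxy ▸ inf_le_left) h)
        have hy : ¬ y ≤ qq := fun h => hc.2 (le_antisymm (hxy ▸ inf_le_right) h)
        have hxw : (S ∩ DeltaS x).Nonempty := by
          by_contra hce
          rw [Set.not_nonempty_iff_eq_empty, ← Set.disjoint_iff_inter_eq_empty] at hce
          refine hx (le_sInf ?_)
          rintro _ ⟨q, hq, rfl⟩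
          by_contra hxq
          exact (Set.disjoint_left.mp hce hq) hxq
        have hyw : (S ∩ DeltaS y).Nonempty := by
          by_contra hce
          rw [Set.not_nonempty_iff_eq_empty, ← Set.disjoint_iff_inter_eq_empty] at hce
          refine hy (le_sInf ?_)
          rintro _ ⟨q, hq, rfl⟩
          by_contra hyq
          exact (Set.disjoint_left.mp hce hq) hyq
        obtain ⟨q, hqS, hqx, hqy⟩ := hS1.2 (DeltaS x) (DeltaS y) (hopen x) (hopen y) hxw hyw
        have : x ⊓ y ≤ (q : L) := hxy ▸ hle q hqS
        rcases SpecS.inf_le q.2 this with h | h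
        · exact hqx h
        · exact hqy h
    refine ⟨⟨qq, hqprime⟩, ?_⟩
    have hmemS : (⟨qq, hqprime⟩ : SpecS L) ∈ S := by rw [hSa]; exact haq
    refine le_antisymm (closure_minimal (Set.singleton_subset_iff.mpr hmemS) hS2) ?_
    intro q hq
    rw [mem_closure_iff]
    rintro _ ⟨c, rfl⟩ hqc
    refine ⟨⟨qq, hqprime⟩, ?_, rfl⟩
    intro hcq
    exact hqc (hcq.trans (hle q hq))
  · -- locally compact
    refine ⟨fun x n hn => ?_⟩
    obtain ⟨U, hUn, hUo, hxU⟩ := mem_nhds_iff.mp hn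
    obtain ⟨a, rfl⟩ := hUo
    have hax : ¬ a ≤ (x : L) := hxU
    obtain ⟨b, hba, hbx⟩ := exists_wayBelow_not_le hcont hax
    obtain ⟨Y, hY0, hYb, hYdec⟩ := exists_chain hcont hba
    set K : Set (SpecS L) := {q | ∀ m, ¬ Y m ≤ (q : L)} with hK
    refine ⟨K, ?_, ?_, isCompact_chain_set hYdec⟩
    · refine mem_nhds_iff.mpr ⟨DeltaS b, ?_, hopen b, hbx⟩
      intro q hq m hm
      exact hq ((wayBelow_le (hYb m)).trans hm)
    · refine Set.Subset.trans ?_ hUn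
      intro q hq
      exact hY0 ▸ hq 0
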